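/- Let (X,ρ) be a metric space, and let γ : T → X and γ′ : T′ → X be almost-geodesic rays with the same initial point z₀ = γ(0) = γ′(0). Suppose that for every N and every ε > 0 there exist s ∈ T and t ∈ T′ with s, t ≥ N and ρ(γ(s),γ′(t)) < ε. Then for every y ∈ X, the limits lim_{s→∞}(ρ(γ(s),z₀) − ρ(γ(s),y)) and lim_{t→∞}(ρ(γ′(t),z₀) − ρ(γ′(t),y)) exist and are equal (that is, γ and γ′ determine the same Busemann point of the metric boundary). -/
import Mathlib


/-- `γ : T → X` is an almost-geodesic ray: for every `ε > 0` there is `N` such that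
for `t ≥ s ≥ N` in `T`, `|ρ(γ(t),γ(s)) + ρ(γ(s),γ(0)) − t| < ε`. -/
def IsAlmostGeodesicRay {X : Type*} [MetricSpace X] (T : Set ℝ) (γ : ℝ → X) : Prop :=
  ∀ ε : ℝ, 0 < ε → ∃ N : ℝ, ∀ t ∈ T, ∀ s ∈ T, N ≤ s → s ≤ t →
    |dist (γ t) (γ s) + dist (γ s) (γ 0) - t| < ε

open Filter Metric Topology

/-- Almost-monotonicity of the Busemann function along an almost-geodesic ray. -/
lemma ray_aux {X : Type*} [MetricSpace X] (T : Set ℝ) (γ : ℝ → X)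
    (hγ : IsAlmostGeodesicRay T γ) (y : X) {ε : ℝ} (hε : 0 < ε) :
    ∃ N : ℝ, ∀ s ∈ T, ∀ t ∈ T, N ≤ s → s ≤ t →
      dist (γ s) (γ 0) - dist (γ s) y - 2 * ε ≤ dist (γ t) (γ 0) - dist (γ t) y := by
  obtain ⟨N, hN⟩ := hγ ε hε
  refine ⟨N, fun s hs t ht hNs hst => ?_⟩
  have h1 := hN t ht s hs hNs hst
  have h2 := hN t ht t ht (le_trans hNs hst) le_rfl
  simp only [dist_self, zero_add] at h2
  have h3 : dist (γ t) y ≤ dist (γ t) (γ s) + dist (γ s) y := dist_triangle _ _ _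
  rw [abs_lt] at h1 h2
  linarith

lemma neBot_inf_principal (T : Set ℝ) (h : ∀ M : ℝ, ∃ t ∈ T, M < t) :
    (atTop ⊓ 𝓟 T).NeBot := by
  rw [Filter.inf_principal_neBot_iff]
  intro U hU
  obtain ⟨a, ha⟩ := mem_atTop_sets.mp hU
  obtain ⟨t, htT, hat⟩ := h a
  exact ⟨t, ha t hat.le, htT⟩

/-- Existence of the Busemann limit along an almost-geodesic ray. -/
lemma exists_limit {X : Type*} [MetricSpace X] (T : Set ℝ)
    (hTunbdd : ∀ M : ℝ, ∃ t ∈ T, M < t) (γ : ℝ → X)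
    (hγ : IsAlmostGeodesicRay T γ) (y : X) :
    ∃ l : ℝ, Tendsto (fun s : ℝ => dist (γ s) (γ 0) - dist (γ s) y)
      (atTop ⊓ 𝓟 T) (𝓝 l) := by
  set φ : ℝ → ℝ := fun s => dist (γ s) (γ 0) - dist (γ s) y with hφ
  haveI hne : (atTop ⊓ 𝓟 T).NeBot := neBot_inf_principal T hTunbdd
  have hc : Cauchy (Filter.map φ (atTop ⊓ 𝓟 T)) := by
    rw [Metric.cauchy_iff]
    refine ⟨Filter.map_neBot, fun ε hε => ?_⟩
    obtain ⟨N, hN⟩ := ray_aux T γ hγ y (show (0:ℝ) < ε/8 by linarith)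
    obtain ⟨t0, ht0T, ht0⟩ := hTunbdd N
    have hAne : (φ '' (Set.Ici N ∩ T)).Nonempty := ⟨φ t0, t0, ⟨ht0.le, ht0T⟩, rfl⟩
    have hbdd : BddAbove (φ '' (Set.Ici N ∩ T)) := by
      refine ⟨dist y (γ 0), ?_⟩
      rintro _ ⟨a, -, rfl⟩
      have := dist_triangle (γ a) y (γ 0)
      simp only [hφ]
      linarith
    set M := sSup (φ '' (Set.Ici N ∩ T)) with hM
    obtain ⟨_, ⟨s0, ⟨hs0N, hs0T⟩, rfl⟩, hs0lt⟩ :=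
      exists_lt_of_lt_csSup hAne (show M - ε/4 < M by linarith)
    have key : ∀ c ∈ T, s0 ≤ c → M - ε/2 < φ c ∧ φ c ≤ M := by
      intro c hcT hsc
      constructor
      · have := hN s0 hs0T c hcT hs0N hsc
        simp only [hφ] at hs0lt ⊢
        linarith
      · exact le_csSup hbdd ⟨c, ⟨le_trans hs0N hsc, hcT⟩, rfl⟩
    refine ⟨φ '' (Set.Ici s0 ∩ T), ?_, ?_⟩
    · rw [Filter.mem_map]
      exact Filter.mem_of_superset
        (Filter.inter_mem_inf (Filter.Ici_mem_atTop s0) (Filter.mem_principal_self T))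
        (Set.subset_preimage_image _ _)
    · rintro _ ⟨a, ⟨has0, haT⟩, rfl⟩ _ ⟨b, ⟨hbs0, hbT⟩, rfl⟩
      obtain ⟨ha1, ha2⟩ := key a haT has0
      obtain ⟨hb1, hb2⟩ := key b hbT hbs0
      clear_value M φ
      rw [Real.dist_eq, abs_lt]
      constructor <;> linarith
  obtain ⟨l, hl⟩ := CompleteSpace.complete hc
  exact ⟨l, hl⟩

/-- Proposition 4.9 of Rieffel: two almost-geodesic rays from the same base point which
come arbitrarily close at arbitrarily late times determine the same Busemann point, i.e.
the limits `lim φ_y(γ(s))` and `lim φ_y(γ′(t))` exist and agree for every `y`. -/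
theorem stmt6 {X : Type*} [MetricSpace X] (T T' : Set ℝ)
    (hT : T ⊆ Set.Ici (0 : ℝ)) (hT0 : (0 : ℝ) ∈ T)
    (hTunbdd : ∀ M : ℝ, ∃ t ∈ T, M < t)
    (hT' : T' ⊆ Set.Ici (0 : ℝ)) (hT'0 : (0 : ℝ) ∈ T')
    (hT'unbdd : ∀ M : ℝ, ∃ t ∈ T', M < t)
    (γ γ' : ℝ → X)
    (hγ : IsAlmostGeodesicRay T γ) (hγ' : IsAlmostGeodesicRay T' γ')
    (hbase : γ 0 = γ' 0)
    (hclose : ∀ N : ℝ, ∀ ε : ℝ, 0 < ε → ∃ s ∈ T, ∃ t ∈ T', N ≤ s ∧ N ≤ t ∧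
      dist (γ s) (γ' t) < ε) :
    ∀ y : X, ∃ l : ℝ,
      Filter.Tendsto (fun s : ℝ => dist (γ s) (γ 0) - dist (γ s) y)
        (Filter.atTop ⊓ Filter.principal T) (nhds l) ∧
      Filter.Tendsto (fun t : ℝ => dist (γ' t) (γ' 0) - dist (γ' t) y)
        (Filter.atTop ⊓ Filter.principal T') (nhds l) := by
  intro y
  obtain ⟨l, hl⟩ := exists_limit T hTunbdd γ hγ y
  obtain ⟨l', hl'⟩ := exists_limit T' hT'unbdd γ' hγ' y
  have hll' : l = l' := by
    apply eq_of_forall_dist_le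
    intro ε hε
    have h1 := (Metric.tendsto_nhds.mp hl) (ε/4) (by linarith)
    have h2 := (Metric.tendsto_nhds.mp hl') (ε/4) (by linarith)
    rw [Filter.eventually_inf_principal, Filter.eventually_atTop] at h1 h2
    obtain ⟨N1, hN1⟩ := h1
    obtain ⟨N2, hN2⟩ := h2
    obtain ⟨s, hsT, t, htT', hs, ht, hst⟩ := hclose (max N1 N2) (ε/4) (by linarith)
    have e1 := hN1 s (le_trans (le_max_left _ _) hs) hsT
    have e2 := hN2 t (le_trans (le_max_right _ _) ht) htT'
    have d1 : |dist (γ s) (γ 0) - dist (γ' t) (γ' 0)| ≤ dist (γ s) (γ' t) := by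
      rw [← hbase]
      exact abs_dist_sub_le _ _ _
    have d2 : |dist (γ s) y - dist (γ' t) y| ≤ dist (γ s) (γ' t) := abs_dist_sub_le _ _ _
    rw [Real.dist_eq] at e1 e2 ⊢
    rw [abs_lt] at e1 e2
    rw [abs_le] at d1 d2 ⊢
    constructor <;> linarith
  exact ⟨l, hl, hll' ▸ hl'⟩
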